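/- arXiv:1603.02527 — 2 statements merged into one kernel-verified Lean document; each statement's English description precedes it below -/
import Mathlib

section
/- Fix T>0, γ>0 and a function δ:(0,1)→(0,∞) with δ(ε)→0 as ε→0. Let M>0 and let {φ_ε}_{ε∈(0,1)}⊂L²(0,T;H) satisfy ‖φ_ε‖²_{L²(0,T;H)}≤M for all ε, and suppose φ_ε converges weakly in L²(0,T;H) to some φ as ε→0. Set Φ_ε := Γ(Q_{δ(ε)}φ_ε). Then for every ρ<1, lim_{ε→0} sup_{t∈[0,T]} ‖Φ_ε(t) − Γ(φ)(t)‖_{H^ρ} = 0. -/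
open MeasureTheory Filter Topology Set
set_option maxHeartbeats 2000000

noncomputable section

/-- The nonzero lattice points `ℤ²₀ = ℤ² \ {0}`. -/
abbrev Z2 : Type := {k : ℤ × ℤ // k ≠ 0}

/-- `|k| = √(k₁² + k₂²)`. -/
def knorm (k : Z2) : ℝ := Real.sqrt ((k.val.1 : ℝ) ^ 2 + (k.val.2 : ℝ) ^ 2)

/-- Membership in `H^s`: summability of `|k|^{2s} |a_k|²`. -/
def MemHs (s : ℝ) (a : Z2 → ℂ) : Prop :=
  Summable fun k : Z2 => knorm k ^ (2 * s) * ‖a k‖ ^ 2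

/-- The `H^s` norm `(Σ_k |k|^{2s}|a_k|²)^{1/2}`. -/
def hsNorm (s : ℝ) (a : Z2 → ℂ) : ℝ :=
  Real.sqrt (∑' k : Z2, knorm k ^ (2 * s) * ‖a k‖ ^ 2)

/-- Membership in `L²(0,T;H)`. -/
def MemL2H (T : ℝ) (φ : ℝ → Z2 → ℂ) : Prop :=
  (∀ k : Z2, Measurable fun t => φ t k) ∧
  (∀ t ∈ Icc (0 : ℝ) T, Summable fun k : Z2 => ‖φ t k‖ ^ 2) ∧
  IntegrableOn (fun t => ∑' k : Z2, ‖φ t k‖ ^ 2) (Ioc 0 T)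

/-- The `L²(0,T;H)` norm. -/
def L2Hnorm (T : ℝ) (φ : ℝ → Z2 → ℂ) : ℝ :=
  Real.sqrt (∫ t in Ioc (0 : ℝ) T, ∑' k : Z2, ‖φ t k‖ ^ 2)

/-- `(Γ(φ)(t))_k = ∫₀ᵗ e^{-(t-s)|k|²} φ_k(s) ds`. -/
def Gam (φ : ℝ → Z2 → ℂ) (t : ℝ) (k : Z2) : ℂ :=
  ∫ s in Ioc (0 : ℝ) t, Real.exp (-(t - s) * knorm k ^ 2) • φ s k

/-- The `L²(0,T;H)` inner product `∫₀ᵀ ⟨ψ(t), φ(t)⟩_H dt`. -/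
def innerL2 (T : ℝ) (ψ φ : ℝ → Z2 → ℂ) : ℂ :=
  ∫ t in Ioc (0 : ℝ) T, ∑' k : Z2, (starRingEnd ℂ) (ψ t k) * φ t k

/-- The eigenvalues `λ_k(δ) = (1 + δ|k|^{2γ})^{-1/2}` of `Q_δ`. -/
def lam (γ δ : ℝ) (k : Z2) : ℝ := (1 + δ * knorm k ^ (2 * γ)) ^ (-(1 / 2) : ℝ)

/-- The diagonal operator `Q_δ`. -/
def Qop (γ δ : ℝ) (a : Z2 → ℂ) (k : Z2) : ℂ := lam γ δ k • a k

end

lemma one_le_knorm (k : Z2) : 1 ≤ knorm k := by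
  rw [knorm, show (1:ℝ) = Real.sqrt 1 by simp]
  apply Real.sqrt_le_sqrt
  rcases (by simpa [Prod.ext_iff] using k.prop : ¬(k.val.1 = 0 ∧ k.val.2 = 0)) with h
  have h1 : k.val.1 ≠ 0 ∨ k.val.2 ≠ 0 := by tauto
  rcases h1 with h1 | h1
  · have : (1:ℝ) ≤ (k.val.1:ℝ)^2 := by
      have := Int.one_le_abs (by simpa using h1)
      have : (1:ℝ) ≤ |(k.val.1:ℝ)| := by exact_mod_cast (by push_cast; exact_mod_cast this : (1:ℝ) ≤ (|k.val.1| : ℝ))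
      nlinarith [sq_abs (k.val.1:ℝ), sq_nonneg (k.val.2:ℝ)]
    nlinarith [sq_nonneg (k.val.2:ℝ)]
  · have : (1:ℝ) ≤ (k.val.2:ℝ)^2 := by
      have := Int.one_le_abs (by simpa using h1)
      have : (1:ℝ) ≤ |(k.val.2:ℝ)| := by exact_mod_cast (by push_cast; exact_mod_cast this : (1:ℝ) ≤ (|k.val.2| : ℝ))
      nlinarith [sq_abs (k.val.2:ℝ), sq_nonneg (k.val.1:ℝ)]
    nlinarith [sq_nonneg (k.val.1:ℝ)]

lemma knorm_pos (k : Z2) : 0 < knorm k := lt_of_lt_of_le one_pos (one_le_knorm k)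

/-- Cauchy–Schwarz for integrals. -/
lemma cs_integral {μ : Measure ℝ} (f g : ℝ → ℝ)
    (hf : Integrable (fun x => f x ^ 2) μ) (hg : Integrable (fun x => g x ^ 2) μ)
    (hfm : AEStronglyMeasurable f μ) (hgm : AEStronglyMeasurable g μ) :
    (∫ x, f x * g x ∂μ) ^ 2 ≤ (∫ x, f x ^ 2 ∂μ) * (∫ x, g x ^ 2 ∂μ) := by
  have hfg : Integrable (fun x => f x * g x) μ := by
    refine Integrable.mono' ((hf.add hg).div_const 2) (hfm.mul hgm) ?_
    filter_upwards with x
    have : |f x * g x| ≤ (f x ^ 2 + g x ^ 2) / 2 := by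
      rw [abs_mul]
      nlinarith [sq_nonneg (|f x| - |g x|), sq_abs (f x), sq_abs (g x), abs_nonneg (f x), abs_nonneg (g x)]
    calc ‖f x * g x‖ = |f x * g x| := rfl
      _ ≤ (f x ^ 2 + g x ^ 2) / 2 := this
      _ = (fun x => (f x ^ 2 + g x ^ 2) / 2) x := rfl
  set A := ∫ x, f x ^ 2 ∂μ
  set B := ∫ x, f x * g x ∂μ
  set C := ∫ x, g x ^ 2 ∂μ
  have key : ∀ r : ℝ, 0 ≤ A * (r * r) + (2 * B) * r + C := by
    intro r
    have : (0:ℝ) ≤ ∫ x, (r * f x + g x) ^ 2 ∂μ := integral_nonneg fun x => sq_nonneg _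
    have expand : ∫ x, (r * f x + g x) ^ 2 ∂μ = A * (r*r) + (2*B) * r + C := by
      have : (fun x => (r * f x + g x) ^ 2) = fun x => (r*r) * f x ^ 2 + (2*r) * (f x * g x) + g x ^ 2 := by
        funext x; ring
      rw [this]
      have h1 : Integrable (fun x => (r*r) * f x ^ 2 + (2*r) * (f x * g x)) μ :=
        (hf.const_mul _).add (hfg.const_mul _)
      rw [show (fun x => (r*r) * f x ^ 2 + (2*r) * (f x * g x) + g x ^ 2)
          = (fun x => ((r*r) * f x ^ 2 + (2*r) * (f x * g x)) + g x ^ 2) from rfl,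
        integral_add h1 hg,
        integral_add (hf.const_mul _) (hfg.const_mul _), integral_const_mul, integral_const_mul]
      ring
    linarith [expand ▸ this]
  have := discrim_le_zero key
  rw [discrim] at this
  nlinarith [this]

lemma integral_exp_mul_real {c : ℝ} (hc : c ≠ 0) (a b : ℝ) :
    (∫ x in a..b, Real.exp (c * x)) = (Real.exp (c * b) - Real.exp (c * a)) / c := by
  have D : ∀ x : ℝ, HasDerivAt (fun y : ℝ => Real.exp (c * y) / c) (Real.exp (c * x)) x := by
    intro x
    have h1 : HasDerivAt (fun y : ℝ => c * y) c x := by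
      simpa using (hasDerivAt_id x).const_mul c
    have h2 := (Real.hasDerivAt_exp (c * x)).comp x h1
    have h3 := h2.div_const c
    simpa [mul_comm, mul_div_assoc, mul_div_cancel_left₀ _ hc] using h3
  rw [intervalIntegral.integral_eq_sub_of_hasDerivAt (fun x _ => D x)
    ((Real.continuous_exp.comp (continuous_const.mul continuous_id)).intervalIntegrable a b)]
  ring

lemma exp_sq_integral_le {κ t : ℝ} (hκ : 0 < κ) (ht : 0 ≤ t) :
    ∫ s in Ioc (0:ℝ) t, Real.exp (-(t - s) * κ) ^ 2 ≤ 1 / (2 * κ) := by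
  set c := 2 * κ with hc
  have hc0 : (0:ℝ) < c := by positivity
  have heq : (fun s => Real.exp (-(t - s) * κ) ^ 2)
      = fun s => Real.exp (c * s) * Real.exp (-(c * t)) := by
    funext s
    rw [sq, ← Real.exp_add, ← Real.exp_add, hc]
    ring_nf
  rw [← intervalIntegral.integral_of_le ht, heq,
    intervalIntegral.integral_mul_const, integral_exp_mul_real hc0.ne', mul_zero,
    Real.exp_zero]
  rw [div_mul_eq_mul_div, sub_mul, ← Real.exp_add, one_mul, add_neg_cancel, Real.exp_zero]
  rw [hc]
  have h1 : Real.exp (-(2 * κ * t)) ≥ 0 := (Real.exp_pos _).le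
  rw [div_le_div_iff₀ (by positivity) (by positivity)]
  nlinarith [Real.exp_pos (-(2*κ*t))]



noncomputable def Iker (T : ℝ) (ψ : ℝ → Z2 → ℂ) (k : Z2) : ℝ :=
  ∫ s in Ioc (0:ℝ) T, ‖ψ s k‖ ^ 2

lemma Iker_nonneg (T : ℝ) (ψ : ℝ → Z2 → ℂ) (k : Z2) : 0 ≤ Iker T ψ k :=
  integral_nonneg fun s => sq_nonneg _

lemma MemL2H.sq_integrableOn {T : ℝ} {ψ : ℝ → Z2 → ℂ} (hψ : MemL2H T ψ) (k : Z2) :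
    IntegrableOn (fun s => ‖ψ s k‖ ^ 2) (Ioc 0 T) := by
  refine Integrable.mono' hψ.2.2 (((hψ.1 k).norm.pow_const 2).aestronglyMeasurable) ?_
  filter_upwards [ae_restrict_mem measurableSet_Ioc] with s hs
  rw [Real.norm_of_nonneg (sq_nonneg _)]
  exact Summable.le_tsum (hψ.2.1 s (Ioc_subset_Icc_self hs)) k (fun j _ => sq_nonneg _)

lemma L2Hnorm_sq (T : ℝ) (ψ : ℝ → Z2 → ℂ) :
    L2Hnorm T ψ ^ 2 = ∫ t in Ioc (0:ℝ) T, ∑' k : Z2, ‖ψ t k‖ ^ 2 :=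
  Real.sq_sqrt (integral_nonneg fun t => tsum_nonneg fun k => sq_nonneg _)

lemma Iker_sum_le {T : ℝ} {ψ : ℝ → Z2 → ℂ} (hψ : MemL2H T ψ) (u : Finset Z2) :
    ∑ k ∈ u, Iker T ψ k ≤ L2Hnorm T ψ ^ 2 := by
  rw [L2Hnorm_sq, show ∑ k ∈ u, Iker T ψ k
      = ∫ s in Ioc (0:ℝ) T, ∑ k ∈ u, ‖ψ s k‖ ^ 2 from
    (integral_finset_sum u (fun k _ => hψ.sq_integrableOn k)).symm]
  refine integral_mono_ae (integrable_finset_sum u (fun k _ => hψ.sq_integrableOn k)) hψ.2.2 ?_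
  filter_upwards [ae_restrict_mem measurableSet_Ioc] with s hs
  exact Summable.sum_le_tsum u (fun j _ => sq_nonneg _) (hψ.2.1 s (Ioc_subset_Icc_self hs))

lemma ker_integrableOn {T : ℝ} {ψ : ℝ → Z2 → ℂ} (hψ : MemL2H T ψ) (k : Z2) (t : ℝ)
    {a b : ℝ} (h : Ioc a b ⊆ Ioc 0 T) (hbt : b ≤ t) :
    IntegrableOn (fun s => Real.exp (-(t - s) * knorm k ^ 2) • ψ s k) (Ioc a b) := by
  have base : IntegrableOn (fun s => (1:ℝ) + ‖ψ s k‖ ^ 2) (Ioc 0 T) :=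
    (integrableOn_const measure_Ioc_lt_top.ne).add (hψ.sq_integrableOn k)
  refine Integrable.mono' (base.mono_set h) ?_ ?_
  · apply Measurable.aestronglyMeasurable
    exact (Real.measurable_exp.comp
      (((measurable_const.sub measurable_id).neg).mul measurable_const)).smul (hψ.1 k)
  · filter_upwards [ae_restrict_mem measurableSet_Ioc] with s hs
    rw [norm_smul, Real.norm_of_nonneg (Real.exp_pos _).le]
    have he : Real.exp (-(t - s) * knorm k ^ 2) ≤ 1 := by
      rw [Real.exp_le_one_iff]
      have : s ≤ t := hs.2.trans hbt
      nlinarith [sq_nonneg (knorm k)]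
    nlinarith [norm_nonneg (ψ s k), sq_nonneg (‖ψ s k‖ - 1), Real.exp_pos (-(t - s) * knorm k ^ 2)]

lemma norm_gam_sq_le {T : ℝ} {ψ : ℝ → Z2 → ℂ} (hψ : MemL2H T ψ) (k : Z2) {t : ℝ}
    (ht : t ∈ Icc (0:ℝ) T) : ‖Gam ψ t k‖ ^ 2 ≤ (knorm k ^ 2)⁻¹ * Iker T ψ k := by
  have hκ : (0:ℝ) < knorm k ^ 2 := pow_pos (knorm_pos k) 2
  have hsub : Ioc (0:ℝ) t ⊆ Ioc 0 T := Ioc_subset_Ioc le_rfl ht.2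
  have h1 : ‖Gam ψ t k‖ ≤ ∫ s in Ioc (0:ℝ) t, Real.exp (-(t - s) * knorm k ^ 2) * ‖ψ s k‖ := by
    refine (norm_integral_le_integral_norm _).trans_eq ?_
    congr 1; funext s; rw [norm_smul, Real.norm_of_nonneg (Real.exp_pos _).le]
  have hexp2 : IntegrableOn (fun s => Real.exp (-(t - s) * knorm k ^ 2) ^ 2) (Ioc 0 t) := by
    apply Continuous.integrableOn_Ioc
    exact (Real.continuous_exp.comp ((continuous_const.sub continuous_id).neg.mul
      continuous_const)).pow 2
  have hg2 : IntegrableOn (fun s => ‖ψ s k‖ ^ 2) (Ioc 0 t) := (hψ.sq_integrableOn k).mono_set hsub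
  have hcs := cs_integral (μ := volume.restrict (Ioc 0 t))
    (fun s => Real.exp (-(t - s) * knorm k ^ 2)) (fun s => ‖ψ s k‖) hexp2 hg2
    ((Real.continuous_exp.comp ((continuous_const.sub continuous_id).neg.mul
      continuous_const)).aestronglyMeasurable)
    (((hψ.1 k).norm).aestronglyMeasurable)
  have hE := exp_sq_integral_le (κ := knorm k ^ 2) hκ ht.1
  have hGle : ∫ s in Ioc (0:ℝ) t, ‖ψ s k‖ ^ 2 ≤ Iker T ψ k := by
    apply setIntegral_mono_set (hψ.sq_integrableOn k) ?_ (HasSubset.Subset.eventuallyLE hsub)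
    filter_upwards with s using sq_nonneg _
  have h2 : ‖Gam ψ t k‖ ^ 2 ≤ (∫ s in Ioc (0:ℝ) t,
      Real.exp (-(t - s) * knorm k ^ 2) * ‖ψ s k‖) ^ 2 :=
    pow_le_pow_left₀ (norm_nonneg _) h1 2
  calc ‖Gam ψ t k‖ ^ 2 ≤ (∫ s in Ioc (0:ℝ) t, Real.exp (-(t - s) * knorm k ^ 2) ^ 2)
        * (∫ s in Ioc (0:ℝ) t, ‖ψ s k‖ ^ 2) := h2.trans hcs
    _ ≤ (1 / (2 * knorm k ^ 2)) * Iker T ψ k := by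
        apply mul_le_mul hE hGle (integral_nonneg fun s => sq_nonneg _)
        positivity
    _ ≤ (knorm k ^ 2)⁻¹ * Iker T ψ k := by
        apply mul_le_mul_of_nonneg_right _ (Iker_nonneg T ψ k)
        rw [one_div]
        apply inv_anti₀ hκ; nlinarith

lemma Gam_Qop (γ d : ℝ) (ψ : ℝ → Z2 → ℂ) (t : ℝ) (k : Z2) :
    Gam (fun s => Qop γ d (ψ s)) t k = lam γ d k • Gam ψ t k := by
  unfold Gam Qop
  rw [← integral_smul]
  congr 1; funext s; rw [smul_comm]

lemma lam_pos {γ d : ℝ} (hd : 0 ≤ d) (k : Z2) : 0 < lam γ d k := by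
  apply Real.rpow_pos_of_pos
  have := Real.rpow_nonneg (knorm_pos k).le (2*γ)
  nlinarith

lemma lam_le_one {γ d : ℝ} (hd : 0 ≤ d) (k : Z2) : lam γ d k ≤ 1 := by
  apply Real.rpow_le_one_of_one_le_of_nonpos
  · have := Real.rpow_nonneg (knorm_pos k).le (2*γ)
    nlinarith
  · norm_num

lemma one_sub_lam_le {γ d : ℝ} (hd : 0 ≤ d) (k : Z2) :
    1 - lam γ d k ≤ d * knorm k ^ (2*γ) := by
  set x := d * knorm k ^ (2*γ) with hx
  have hx0 : 0 ≤ x := by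
    have := Real.rpow_nonneg (knorm_pos k).le (2*γ); positivity
  have h1 : (1+x) ^ (-(1:ℝ)) ≤ (1+x) ^ (-(1/2):ℝ) :=
    Real.rpow_le_rpow_of_exponent_le (by linarith) (by norm_num)
  have h2 : (1+x) ^ (-(1:ℝ)) = (1+x)⁻¹ := Real.rpow_neg_one _
  have h3 : 1 - x ≤ (1+x)⁻¹ := by
    rw [← one_div, le_div_iff₀ (by linarith)]
    nlinarith
  have : lam γ d k = (1+x) ^ (-(1/2):ℝ) := rfl
  rw [this]
  linarith [h2 ▸ h1]


lemma integral_one_Ioc {a b : ℝ} (hab : a ≤ b) :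
    ∫ _ in Ioc a b, (1:ℝ) = b - a := by
  simp [Real.volume_Ioc, ENNReal.toReal_ofReal (by linarith : (0:ℝ) ≤ b - a)]
  exact hab

lemma gam_equicont {T : ℝ} {ψ : ℝ → Z2 → ℂ} (hψ : MemL2H T ψ) (k : Z2) {t' t : ℝ}
    (h0 : 0 ≤ t') (h't : t' ≤ t) (htT : t ≤ T) :
    ‖Gam ψ t k - Gam ψ t' k‖ ≤ Real.sqrt (t - t') * Real.sqrt (Iker T ψ k)
      + knorm k ^ 2 * (t - t') * (T + Iker T ψ k) := by
  set κ := knorm k ^ 2 with hκdef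
  have hκ : (0:ℝ) < κ := pow_pos (knorm_pos k) 2
  have h0T : (0:ℝ) ≤ T := h0.trans (h't.trans htT)
  have hsub1 : Ioc (0:ℝ) t' ⊆ Ioc 0 T := Ioc_subset_Ioc le_rfl (h't.trans htT)
  have hsub2 : Ioc t' t ⊆ Ioc 0 T := Ioc_subset_Ioc h0 htT
  have hI1 : IntegrableOn (fun s => Real.exp (-(t - s) * κ) • ψ s k) (Ioc 0 t') :=
    ker_integrableOn hψ k t hsub1 h't
  have hI2 : IntegrableOn (fun s => Real.exp (-(t - s) * κ) • ψ s k) (Ioc t' t) :=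
    ker_integrableOn hψ k t hsub2 le_rfl
  have hI1' : IntegrableOn (fun s => Real.exp (-(t' - s) * κ) • ψ s k) (Ioc 0 t') :=
    ker_integrableOn hψ k t' hsub1 le_rfl
  have hsplit : Gam ψ t k = (∫ s in Ioc (0:ℝ) t', Real.exp (-(t - s) * κ) • ψ s k)
      + ∫ s in Ioc t' t, Real.exp (-(t - s) * κ) • ψ s k := by
    rw [Gam, ← hκdef, ← setIntegral_union (Ioc_disjoint_Ioc_of_le le_rfl) measurableSet_Ioc hI1 hI2,
      Ioc_union_Ioc_eq_Ioc h0 h't]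
  have key : Gam ψ t k - Gam ψ t' k
      = (∫ s in Ioc (0:ℝ) t', (Real.exp (-(t - s) * κ) - Real.exp (-(t' - s) * κ)) • ψ s k)
        + ∫ s in Ioc t' t, Real.exp (-(t - s) * κ) • ψ s k := by
    rw [hsplit, Gam, ← hκdef]
    have : ∫ s in Ioc (0:ℝ) t', (Real.exp (-(t - s) * κ) - Real.exp (-(t' - s) * κ)) • ψ s k
        = (∫ s in Ioc (0:ℝ) t', Real.exp (-(t - s) * κ) • ψ s k)
          - ∫ s in Ioc (0:ℝ) t', Real.exp (-(t' - s) * κ) • ψ s k := by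
      rw [← integral_sub hI1 hI1']
      congr 1; funext s; rw [sub_smul]
    rw [this]; ring
  -- term A bound
  have hbase : IntegrableOn (fun s => (1:ℝ) + ‖ψ s k‖ ^ 2) (Ioc 0 T) :=
    (integrableOn_const measure_Ioc_lt_top.ne).add (hψ.sq_integrableOn k)
  have hA : ‖∫ s in Ioc (0:ℝ) t', (Real.exp (-(t - s) * κ) - Real.exp (-(t' - s) * κ)) • ψ s k‖
      ≤ κ * (t - t') * (T + Iker T ψ k) := by
    have hbd : ∀ᵐ s ∂(volume.restrict (Ioc (0:ℝ) t')),
        ‖(Real.exp (-(t - s) * κ) - Real.exp (-(t' - s) * κ)) • ψ s k‖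
          ≤ κ * (t - t') * ((1:ℝ) + ‖ψ s k‖ ^ 2) := by
      filter_upwards [ae_restrict_mem measurableSet_Ioc] with s hs
      rw [norm_smul, Real.norm_eq_abs]
      have hst : s ≤ t' := hs.2
      have hE1 : Real.exp (-(t - s) * κ)
          = Real.exp (-(t' - s) * κ) * Real.exp (-((t - t') * κ)) := by
        rw [← Real.exp_add]; ring_nf
      have hE2le : Real.exp (-(t' - s) * κ) ≤ 1 := by
        rw [Real.exp_le_one_iff]; nlinarith
      have hone : 1 - Real.exp (-((t - t') * κ)) ≤ (t - t') * κ := by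
        nlinarith [Real.add_one_le_exp (-((t - t') * κ))]
      have hE'le : Real.exp (-((t - t') * κ)) ≤ 1 := by
        rw [Real.exp_le_one_iff]; nlinarith
      have hfact : Real.exp (-(t' - s) * κ) - Real.exp (-(t - s) * κ)
          = Real.exp (-(t' - s) * κ) * (1 - Real.exp (-((t - t') * κ))) := by
        rw [hE1]; ring
      have habs : |Real.exp (-(t - s) * κ) - Real.exp (-(t' - s) * κ)| ≤ κ * (t - t') := by
        rw [abs_sub_comm, abs_of_nonneg]
        · rw [hfact]
          calc Real.exp (-(t' - s) * κ) * (1 - Real.exp (-((t - t') * κ)))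
              ≤ 1 * (1 - Real.exp (-((t - t') * κ))) := by
                apply mul_le_mul_of_nonneg_right hE2le; linarith
            _ ≤ κ * (t - t') := by nlinarith
        · rw [hfact]
          apply mul_nonneg (Real.exp_pos _).le; linarith
      have hψb : ‖ψ s k‖ ≤ 1 + ‖ψ s k‖ ^ 2 := by nlinarith [sq_nonneg (‖ψ s k‖ - 1)]
      have hκt : (0:ℝ) ≤ κ * (t - t') := by nlinarith
      calc |Real.exp (-(t - s) * κ) - Real.exp (-(t' - s) * κ)| * ‖ψ s k‖
          ≤ (κ * (t - t')) * (1 + ‖ψ s k‖ ^ 2) := by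
            apply mul_le_mul habs hψb (norm_nonneg _) hκt
        _ = κ * (t - t') * ((1:ℝ) + ‖ψ s k‖ ^ 2) := by ring
    have := norm_integral_le_of_norm_le ((hbase.mono_set hsub1).const_mul (κ * (t - t'))) hbd
    refine this.trans ?_
    rw [integral_const_mul]
    have : ∫ s in Ioc (0:ℝ) t', ((1:ℝ) + ‖ψ s k‖ ^ 2)
        ≤ T + Iker T ψ k := by
      rw [integral_add (integrableOn_const (C := (1:ℝ)) measure_Ioc_lt_top.ne)
        ((hψ.sq_integrableOn k).mono_set hsub1), integral_one_Ioc h0]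
      have h1 : t' - 0 ≤ T := by linarith
      have h2 : ∫ s in Ioc (0:ℝ) t', ‖ψ s k‖ ^ 2 ≤ Iker T ψ k := by
        apply setIntegral_mono_set (hψ.sq_integrableOn k) ?_ (HasSubset.Subset.eventuallyLE hsub1)
        filter_upwards with s using sq_nonneg _
      linarith
    have hκt : (0:ℝ) ≤ κ * (t - t') := by nlinarith
    nlinarith [this]
  -- term B bound
  have hB : ‖∫ s in Ioc t' t, Real.exp (-(t - s) * κ) • ψ s k‖
      ≤ Real.sqrt (t - t') * Real.sqrt (Iker T ψ k) := by
    have h1 : ‖∫ s in Ioc t' t, Real.exp (-(t - s) * κ) • ψ s k‖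
        ≤ ∫ s in Ioc t' t, Real.exp (-(t - s) * κ) * ‖ψ s k‖ := by
      refine (norm_integral_le_integral_norm _).trans_eq ?_
      congr 1; funext s; rw [norm_smul, Real.norm_of_nonneg (Real.exp_pos _).le]
    have hexp2 : IntegrableOn (fun s => Real.exp (-(t - s) * κ) ^ 2) (Ioc t' t) := by
      apply Continuous.integrableOn_Ioc
      exact (Real.continuous_exp.comp ((continuous_const.sub continuous_id).neg.mul
        continuous_const)).pow 2
    have hg2 : IntegrableOn (fun s => ‖ψ s k‖ ^ 2) (Ioc t' t) :=
      (hψ.sq_integrableOn k).mono_set hsub2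
    have hcs := cs_integral (μ := volume.restrict (Ioc t' t))
      (fun s => Real.exp (-(t - s) * κ)) (fun s => ‖ψ s k‖) hexp2 hg2
      ((Real.continuous_exp.comp ((continuous_const.sub continuous_id).neg.mul
        continuous_const)).aestronglyMeasurable)
      (((hψ.1 k).norm).aestronglyMeasurable)
    have he2 : ∫ s in Ioc t' t, Real.exp (-(t - s) * κ) ^ 2 ≤ t - t' := by
      have : ∀ᵐ s ∂(volume.restrict (Ioc t' t)), Real.exp (-(t - s) * κ) ^ 2 ≤ (1:ℝ) := by
        filter_upwards [ae_restrict_mem measurableSet_Ioc] with s hs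
        have : Real.exp (-(t - s) * κ) ≤ 1 := by
          rw [Real.exp_le_one_iff]; nlinarith [hs.2]
        nlinarith [Real.exp_pos (-(t - s) * κ)]
      calc ∫ s in Ioc t' t, Real.exp (-(t - s) * κ) ^ 2
          ≤ ∫ _ in Ioc t' t, (1:ℝ) := integral_mono_ae hexp2
            (integrableOn_const measure_Ioc_lt_top.ne) this
        _ = t - t' := integral_one_Ioc h't
    have hg2' : ∫ s in Ioc t' t, ‖ψ s k‖ ^ 2 ≤ Iker T ψ k := by
      apply setIntegral_mono_set (hψ.sq_integrableOn k) ?_ (HasSubset.Subset.eventuallyLE hsub2)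
      filter_upwards with s using sq_nonneg _
    have hint_nonneg : (0:ℝ) ≤ ∫ s in Ioc t' t, Real.exp (-(t - s) * κ) * ‖ψ s k‖ :=
      integral_nonneg fun s => mul_nonneg (Real.exp_pos _).le (norm_nonneg _)
    have hsq : (∫ s in Ioc t' t, Real.exp (-(t - s) * κ) * ‖ψ s k‖) ^ 2
        ≤ (t - t') * Iker T ψ k := by
      refine hcs.trans ?_
      apply mul_le_mul he2 hg2' (integral_nonneg fun s => sq_nonneg _) (by linarith)
    have : (∫ s in Ioc t' t, Real.exp (-(t - s) * κ) * ‖ψ s k‖)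
        ≤ Real.sqrt ((t - t') * Iker T ψ k) := by
      calc (∫ s in Ioc t' t, Real.exp (-(t - s) * κ) * ‖ψ s k‖)
          = Real.sqrt ((∫ s in Ioc t' t, Real.exp (-(t - s) * κ) * ‖ψ s k‖) ^ 2) :=
            (Real.sqrt_sq hint_nonneg).symm
        _ ≤ Real.sqrt ((t - t') * Iker T ψ k) := Real.sqrt_le_sqrt hsq
    refine (h1.trans this).trans_eq ?_
    rw [Real.sqrt_mul (by linarith : (0:ℝ) ≤ t - t')]
  rw [key]
  refine (norm_add_le _ _).trans ?_
  linarith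


lemma gam_weak {T : ℝ} {φ : ℝ → ℝ → Z2 → ℂ} {φlim : ℝ → Z2 → ℂ}
    (hweak : ∀ ψ : ℝ → Z2 → ℂ, MemL2H T ψ →
      Tendsto (fun ε => innerL2 T ψ (φ ε)) (𝓝[>] 0) (𝓝 (innerL2 T ψ φlim)))
    (k : Z2) {t : ℝ} (ht : t ∈ Icc (0:ℝ) T) :
    Tendsto (fun ε => Gam (φ ε) t k) (𝓝[>] 0) (𝓝 (Gam φlim t k)) := by
  classical
  set ψ0 : ℝ → Z2 → ℂ := fun s k' => if k' = k then
    (Ioc (0:ℝ) t).indicator (fun s => ((Real.exp (-(t - s) * knorm k ^ 2) : ℝ) : ℂ)) s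
    else 0 with hψ0
  have hmem : MemL2H T ψ0 := by
    refine ⟨?_, ?_, ?_⟩
    · intro k'
      by_cases h : k' = k
      · simp only [hψ0, h, if_true]
        exact (Measurable.indicator (Complex.measurable_ofReal.comp
          (Real.measurable_exp.comp (((measurable_const.sub measurable_id).neg).mul
          measurable_const))) measurableSet_Ioc)
      · simp only [hψ0, h, if_false]; exact measurable_const
    · intro s _
      apply summable_of_ne_finset_zero (s := {k})
      intro b hb
      simp only [Finset.mem_singleton] at hb
      simp [hψ0, hb]
    · have htsum : ∀ s : ℝ, (∑' k' : Z2, ‖ψ0 s k'‖ ^ 2)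
          = ‖(Ioc (0:ℝ) t).indicator
              (fun s => ((Real.exp (-(t - s) * knorm k ^ 2) : ℝ) : ℂ)) s‖ ^ 2 := by
        intro s
        rw [tsum_eq_single k]
        · simp [hψ0]
        · intro b hb; simp [hψ0, hb]
      have hfeq : (fun s => ∑' k' : Z2, ‖ψ0 s k'‖ ^ 2) = fun s =>
          ‖(Ioc (0:ℝ) t).indicator
            (fun s => ((Real.exp (-(t - s) * knorm k ^ 2) : ℝ) : ℂ)) s‖ ^ 2 := funext htsum
      rw [IntegrableOn, hfeq]
      refine Integrable.mono' (g := fun _ => (1:ℝ))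
        (integrableOn_const measure_Ioc_lt_top.ne) ?_ ?_
      · exact ((Measurable.indicator (Complex.measurable_ofReal.comp
          (Real.measurable_exp.comp (((measurable_const.sub measurable_id).neg).mul
          measurable_const))) measurableSet_Ioc).norm.pow_const 2).aestronglyMeasurable
      · filter_upwards [ae_restrict_mem measurableSet_Ioc] with s _
        rw [Real.norm_of_nonneg (sq_nonneg _)]
        rw [Set.indicator_apply]
        split_ifs with h
        · have : Real.exp (-(t - s) * knorm k ^ 2) ≤ 1 := by
            rw [Real.exp_le_one_iff]
            nlinarith [h.2, sq_nonneg (knorm k), pow_pos (knorm_pos k) 2]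
          rw [Complex.norm_real, Real.norm_of_nonneg (Real.exp_pos _).le]
          nlinarith [Real.exp_pos (-(t - s) * knorm k ^ 2)]
        · simp
  have hkey : ∀ χ : ℝ → Z2 → ℂ, innerL2 T ψ0 χ = Gam χ t k := by
    intro χ
    rw [innerL2, Gam]
    have h1 : ∀ s : ℝ, (∑' k' : Z2, (starRingEnd ℂ) (ψ0 s k') * χ s k')
        = (Ioc (0:ℝ) t).indicator
            (fun s => Real.exp (-(t - s) * knorm k ^ 2) • χ s k) s := by
      intro s
      rw [tsum_eq_single k]
      · simp only [hψ0, if_true]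
        rw [Set.indicator_apply, Set.indicator_apply]
        split_ifs with h
        · rw [Complex.conj_ofReal, Complex.real_smul]
        · simp
      · intro b hb; simp [hψ0, hb]
    simp_rw [h1]
    rw [setIntegral_indicator measurableSet_Ioc, Ioc_inter_Ioc]
    congr 1
    · congr 1 <;> simp [ht.2]
  have := hweak ψ0 hmem
  simpa only [hkey] using this


lemma Iker_le {T : ℝ} {ψ : ℝ → Z2 → ℂ} (hψ : MemL2H T ψ) (k : Z2) :
    Iker T ψ k ≤ L2Hnorm T ψ ^ 2 := by
  simpa using Iker_sum_le hψ {k}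

lemma gam_tendsto_uniform {T : ℝ} (hT : 0 < T) {φ : ℝ → ℝ → Z2 → ℂ} {φlim : ℝ → Z2 → ℂ}
    (hφ : ∀ ε ∈ Ioo (0 : ℝ) 1, MemL2H T (φ ε)) (hφlim : MemL2H T φlim)
    {M : ℝ} (hM : 0 < M) (hbound : ∀ ε ∈ Ioo (0 : ℝ) 1, (L2Hnorm T (φ ε)) ^ 2 ≤ M)
    (hweak : ∀ ψ : ℝ → Z2 → ℂ, MemL2H T ψ →
      Tendsto (fun ε => innerL2 T ψ (φ ε)) (𝓝[>] 0) (𝓝 (innerL2 T ψ φlim)))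
    (k : Z2) {θ : ℝ} (hθ : 0 < θ) :
    ∀ᶠ ε in 𝓝[>] (0:ℝ), ε ∈ Ioo (0:ℝ) 1 →
      ∀ t ∈ Icc (0:ℝ) T, ‖Gam (φ ε) t k - Gam φlim t k‖ ≤ θ := by
  classical
  set κ := knorm k ^ 2 with hκdef
  have hκ : (0:ℝ) < κ := pow_pos (knorm_pos k) 2
  set Ml := L2Hnorm T φlim ^ 2 with hMl
  have hMl0 : 0 ≤ Ml := sq_nonneg _
  set B1 : ℝ := Real.sqrt M + Real.sqrt Ml with hB1
  set B2 : ℝ := κ * (2*T + M + Ml) with hB2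
  have hB10 : 0 ≤ B1 := add_nonneg (Real.sqrt_nonneg _) (Real.sqrt_nonneg _)
  have hB20 : 0 ≤ B2 := by
    apply mul_nonneg hκ.le; nlinarith
  -- equicontinuity of the difference
  have equi : ∀ ε ∈ Ioo (0:ℝ) 1, ∀ t' t : ℝ, 0 ≤ t' → t' ≤ t → t ≤ T →
      ‖(Gam (φ ε) t k - Gam φlim t k) - (Gam (φ ε) t' k - Gam φlim t' k)‖
        ≤ Real.sqrt (t - t') * B1 + (t - t') * B2 := by
    intro ε hε t' t h0 h't htT
    have e1 := gam_equicont (hφ ε hε) k h0 h't htT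
    have e2 := gam_equicont hφlim k h0 h't htT
    rw [← hκdef] at e1 e2
    have i1 : Iker T (φ ε) k ≤ M := (Iker_le (hφ ε hε) k).trans (hbound ε hε)
    have i2 : Iker T φlim k ≤ Ml := Iker_le hφlim k
    have s1 : Real.sqrt (Iker T (φ ε) k) ≤ Real.sqrt M := Real.sqrt_le_sqrt i1
    have s2 : Real.sqrt (Iker T φlim k) ≤ Real.sqrt Ml := Real.sqrt_le_sqrt i2
    have hnn : 0 ≤ Real.sqrt (t - t') := Real.sqrt_nonneg _
    have htt : 0 ≤ t - t' := by linarith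
    calc ‖(Gam (φ ε) t k - Gam φlim t k) - (Gam (φ ε) t' k - Gam φlim t' k)‖
        ≤ ‖Gam (φ ε) t k - Gam (φ ε) t' k‖ + ‖Gam φlim t k - Gam φlim t' k‖ := by
          have : (Gam (φ ε) t k - Gam φlim t k) - (Gam (φ ε) t' k - Gam φlim t' k)
              = (Gam (φ ε) t k - Gam (φ ε) t' k) - (Gam φlim t k - Gam φlim t' k) := by ring
          rw [this]; exact norm_sub_le _ _
      _ ≤ Real.sqrt (t - t') * B1 + (t - t') * B2 := by
          have b1 : Real.sqrt (t-t') * Real.sqrt (Iker T (φ ε) k)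
              ≤ Real.sqrt (t-t') * Real.sqrt M := by
            apply mul_le_mul_of_nonneg_left s1 hnn
          have b2 : Real.sqrt (t-t') * Real.sqrt (Iker T φlim k)
              ≤ Real.sqrt (t-t') * Real.sqrt Ml := by
            apply mul_le_mul_of_nonneg_left s2 hnn
          have c1 : κ * (t - t') * (T + Iker T (φ ε) k) ≤ κ * (t - t') * (T + M) := by
            apply mul_le_mul_of_nonneg_left (by linarith [Iker_nonneg T (φ ε) k])
              (by nlinarith)
          have c2 : κ * (t - t') * (T + Iker T φlim k) ≤ κ * (t - t') * (T + Ml) := by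
            apply mul_le_mul_of_nonneg_left (by linarith [Iker_nonneg T φlim k])
              (by nlinarith)
          have hth : κ * (t-t') * (T + M) + κ * (t-t') * (T + Ml) = (t - t') * B2 := by
            rw [hB2]; ring
          have hBexp : Real.sqrt (t-t') * B1
              = Real.sqrt (t-t') * Real.sqrt M + Real.sqrt (t-t') * Real.sqrt Ml := by
            rw [hB1]; ring
          linarith [e1, e2, b1, b2, c1, c2]
  -- choice of mesh size
  obtain ⟨h, hh0, hsB1, hsB2⟩ : ∃ h : ℝ, 0 < h ∧ Real.sqrt h * B1 ≤ θ/4 ∧ h * B2 ≤ θ/4 := by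
    refine ⟨min ((θ/(4*(B1+1)))^2) (θ/(4*(B2+1))), lt_min (by positivity) (by positivity),
      ?_, ?_⟩
    · have h1 : Real.sqrt (min ((θ/(4*(B1+1)))^2) (θ/(4*(B2+1)))) ≤ θ/(4*(B1+1)) := by
        calc Real.sqrt (min ((θ/(4*(B1+1)))^2) (θ/(4*(B2+1))))
            ≤ Real.sqrt ((θ/(4*(B1+1)))^2) := Real.sqrt_le_sqrt (min_le_left _ _)
          _ = θ/(4*(B1+1)) := Real.sqrt_sq (by positivity)
      calc Real.sqrt (min ((θ/(4*(B1+1)))^2) (θ/(4*(B2+1)))) * B1 ≤ (θ/(4*(B1+1))) * B1 :=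
            mul_le_mul_of_nonneg_right h1 hB10
        _ ≤ θ/4 := by
            rw [div_mul_eq_mul_div, div_le_div_iff₀ (by positivity) (by norm_num)]
            nlinarith
    · calc min ((θ/(4*(B1+1)))^2) (θ/(4*(B2+1))) * B2 ≤ (θ/(4*(B2+1))) * B2 :=
            mul_le_mul_of_nonneg_right (min_le_right _ _) hB20
        _ ≤ θ/4 := by
            rw [div_mul_eq_mul_div, div_le_div_iff₀ (by positivity) (by norm_num)]
            nlinarith
  set N : ℕ := ⌈T / h⌉₊ with hN
  -- eventual closeness at grid points
  have hgrid : ∀ᶠ ε in 𝓝[>] (0:ℝ), ∀ j ∈ Finset.range (N+1),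
      ‖Gam (φ ε) (min ((j:ℝ)*h) T) k - Gam φlim (min ((j:ℝ)*h) T) k‖ < θ/2 := by
    rw [eventually_all_finset]
    intro j _
    have hmem : min ((j:ℝ)*h) T ∈ Icc (0:ℝ) T := by
      constructor
      · apply le_min (by positivity) hT.le
      · exact min_le_right _ _
    have := (gam_weak hweak k hmem).sub (tendsto_const_nhds
      (x := Gam φlim (min ((j:ℝ)*h) T) k) (f := 𝓝[>] (0:ℝ)))
    rw [sub_self] at this
    have hn := this.norm
    rw [norm_zero] at hn
    exact hn.eventually_lt_const (by positivity)
  filter_upwards [hgrid] with ε hε hε1 t ht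
  -- approximate t by a grid point
  set j : ℕ := ⌊t / h⌋₊ with hj
  have hth : 0 ≤ t / h := div_nonneg ht.1 hh0.le
  have ht' : (j:ℝ) * h ≤ t := by
    rw [← le_div_iff₀ hh0]; exact Nat.floor_le hth
  have htt' : t - (j:ℝ)*h ≤ h := by
    have := Nat.lt_floor_add_one (t/h)
    rw [div_lt_iff₀ hh0] at this
    push_cast at this
    linarith
  have hjN : j ∈ Finset.range (N+1) := by
    rw [Finset.mem_range, Nat.lt_succ_iff, hj, hN]
    exact (Nat.floor_le_floor (by gcongr; exact ht.2 : t/h ≤ T/h)).trans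
      (Nat.floor_le_ceil _)
  have hmin : min ((j:ℝ)*h) T = (j:ℝ)*h := min_eq_left (ht'.trans ht.2)
  have hclose := hε j hjN
  rw [hmin] at hclose
  have hequi := equi ε hε1 ((j:ℝ)*h) t (by positivity) ht' ht.2
  have h1 : Real.sqrt (t - (j:ℝ)*h) ≤ Real.sqrt h := Real.sqrt_le_sqrt htt'
  have key : ‖Gam (φ ε) t k - Gam φlim t k‖
      ≤ ‖Gam (φ ε) ((j:ℝ)*h) k - Gam φlim ((j:ℝ)*h) k‖
        + (Real.sqrt (t - (j:ℝ)*h) * B1 + (t - (j:ℝ)*h) * B2) := by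
    have := norm_add_le ((Gam (φ ε) ((j:ℝ)*h) k - Gam φlim ((j:ℝ)*h) k))
      ((Gam (φ ε) t k - Gam φlim t k) - (Gam (φ ε) ((j:ℝ)*h) k - Gam φlim ((j:ℝ)*h) k))
    simp only [add_sub_cancel] at this
    linarith [hequi]
  have h2 : Real.sqrt (t - (j:ℝ)*h) * B1 ≤ Real.sqrt h * B1 :=
    mul_le_mul_of_nonneg_right h1 hB10
  have h3 : (t - (j:ℝ)*h) * B2 ≤ h * B2 := mul_le_mul_of_nonneg_right htt' hB20
  calc ‖Gam (φ ε) t k - Gam φlim t k‖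
      ≤ ‖Gam (φ ε) ((j:ℝ)*h) k - Gam φlim ((j:ℝ)*h) k‖
        + (Real.sqrt (t - (j:ℝ)*h) * B1 + (t - (j:ℝ)*h) * B2) := key
    _ ≤ θ/2 + (θ/4 + θ/4) := by
        have := h2.trans hsB1
        have := h3.trans hsB2
        have := hclose.le
        gcongr <;> linarith
    _ = θ := by ring


lemma finite_knorm_le (R : ℝ) : {k : Z2 | knorm k ≤ R}.Finite := by
  have hsub : {k : Z2 | knorm k ≤ R} ⊆
      Subtype.val ⁻¹' (Icc ((-⌈R⌉, -⌈R⌉) : ℤ × ℤ) ((⌈R⌉, ⌈R⌉) : ℤ × ℤ)) := by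
    intro k hk
    simp only [mem_setOf_eq] at hk
    have h1 : |(k.val.1 : ℝ)| ≤ knorm k := by
      rw [knorm, ← Real.sqrt_sq_eq_abs]
      exact Real.sqrt_le_sqrt (by nlinarith [sq_nonneg ((k.val.2 : ℝ))])
    have h2 : |(k.val.2 : ℝ)| ≤ knorm k := by
      rw [knorm, ← Real.sqrt_sq_eq_abs]
      exact Real.sqrt_le_sqrt (by nlinarith [sq_nonneg ((k.val.1 : ℝ))])
    have hR : R ≤ (⌈R⌉ : ℝ) := Int.le_ceil R
    simp only [mem_preimage, mem_Icc, Prod.le_def]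
    rw [abs_le] at h1 h2
    constructor
    · constructor
      · exact_mod_cast (by push_cast; linarith : ((-⌈R⌉ : ℤ) : ℝ) ≤ (k.val.1 : ℝ))
      · exact_mod_cast (by push_cast; linarith : ((-⌈R⌉ : ℤ) : ℝ) ≤ (k.val.2 : ℝ))
    · constructor
      · exact_mod_cast (by linarith : (k.val.1 : ℝ) ≤ ((⌈R⌉ : ℤ) : ℝ))
      · exact_mod_cast (by linarith : (k.val.2 : ℝ) ≤ ((⌈R⌉ : ℤ) : ℝ))
  exact (Set.Finite.preimage (Subtype.val_injective.injOn)
    (Set.finite_Icc _ _)).subset hsub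

lemma rpow_head_le {R ρ : ℝ} (hR : 1 ≤ R) (k : Z2) (hk : knorm k ≤ R) :
    knorm k ^ (2*ρ) ≤ max 1 (R ^ (2*ρ)) := by
  rcases le_or_gt 0 (2*ρ) with h | h
  · exact le_max_of_le_right (Real.rpow_le_rpow (knorm_pos k).le hk h)
  · exact le_max_of_le_left (Real.rpow_le_one_of_one_le_of_nonpos (one_le_knorm k) h.le)

lemma knorm_rpow_inv (k : Z2) (ρ : ℝ) :
    knorm k ^ (2*ρ) * (knorm k ^ 2)⁻¹ = knorm k ^ (2*ρ - 2) := by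
  have h2 : (knorm k ^ 2 : ℝ) = knorm k ^ ((2:ℕ):ℝ) := (Real.rpow_natCast _ 2).symm
  rw [h2, ← Real.rpow_neg (knorm_pos k).le, ← Real.rpow_add (knorm_pos k)]
  norm_num
  ring_nf

/-- if `δ(ε) → 0`, the `φ_ε` are bounded in `L²(0,T;H)` and converge weakly to
`φ`, then `Φ_ε = Γ(Q_{δ(ε)}φ_ε)` converges to `Γ(φ)` uniformly on `[0,T]` in `H^ρ`,
for every `ρ < 1`. -/
theorem stmt3 (T γ : ℝ) (hT : 0 < T) (hγ : 0 < γ)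
    (δ : ℝ → ℝ) (hδpos : ∀ ε ∈ Ioo (0 : ℝ) 1, 0 < δ ε)
    (hδ0 : Tendsto δ (𝓝[>] 0) (𝓝 0))
    (M : ℝ) (hM : 0 < M)
    (φ : ℝ → ℝ → Z2 → ℂ) (φlim : ℝ → Z2 → ℂ)
    (hφ : ∀ ε ∈ Ioo (0 : ℝ) 1, MemL2H T (φ ε))
    (hφlim : MemL2H T φlim)
    (hbound : ∀ ε ∈ Ioo (0 : ℝ) 1, (L2Hnorm T (φ ε)) ^ 2 ≤ M)
    (hweak : ∀ ψ : ℝ → Z2 → ℂ, MemL2H T ψ →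
      Tendsto (fun ε => innerL2 T ψ (φ ε)) (𝓝[>] 0) (𝓝 (innerL2 T ψ φlim))) :
    ∀ ρ < (1 : ℝ), ∀ η > (0 : ℝ), ∃ ε₀ > (0 : ℝ), ∀ ε ∈ Ioo (0 : ℝ) 1, ε < ε₀ →
      ∀ t ∈ Icc (0 : ℝ) T,
        hsNorm ρ (fun k => Gam (fun s => Qop γ (δ ε) (φ ε s)) t k - Gam φlim t k) < η := by
  intro ρ hρ η hη
  classical
  set Ml := L2Hnorm T φlim ^ 2 with hMl
  have hMl0 : 0 ≤ Ml := sq_nonneg _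
  -- choose the truncation radius R
  obtain ⟨R, hR1, hRtail⟩ : ∃ R : ℝ, 1 ≤ R ∧ R ^ (2*ρ - 2) * (2*(M + Ml)) ≤ η^2/4 := by
    have hneg : (0:ℝ) < 2 - 2*ρ := by linarith
    have htend : Tendsto (fun x : ℝ => x ^ (2*ρ - 2)) atTop (𝓝 0) := by
      have h := tendsto_rpow_neg_atTop hneg
      have : (fun x : ℝ => x ^ (-(2 - 2*ρ))) = fun x : ℝ => x ^ (2*ρ - 2) := by
        funext x; ring_nf
      rwa [this] at h
    have hb : (0:ℝ) < η^2/(4*(2*(M+Ml)+1)) := by positivity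
    obtain ⟨R, hR1, hR2⟩ := ((htend.eventually_lt_const hb).and
      (eventually_ge_atTop (1:ℝ))).exists
    refine ⟨R, hR2, ?_⟩
    have h0 : (0:ℝ) ≤ R ^ (2*ρ-2) := Real.rpow_nonneg (by linarith) _
    have h1 : R ^ (2*ρ-2) * (2*(M+Ml)) ≤ (η^2/(4*(2*(M+Ml)+1))) * (2*(M+Ml)) := by
      apply mul_le_mul_of_nonneg_right hR1.le (by nlinarith)
    refine h1.trans ?_
    rw [div_mul_eq_mul_div, div_le_div_iff₀ (by positivity) (by norm_num)]
    nlinarith [sq_nonneg η, mul_nonneg (sq_nonneg η) (by nlinarith : (0:ℝ) ≤ M + Ml)]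
  have hR0 : (0:ℝ) < R := lt_of_lt_of_le one_pos hR1
  set Sf := (finite_knorm_le R).toFinset with hSf
  set n := Sf.card with hn
  set C2 := max 1 (R ^ (2*ρ)) with hC2
  have hC21 : (1:ℝ) ≤ C2 := le_max_left _ _
  have hC20 : (0:ℝ) < C2 := lt_of_lt_of_le one_pos hC21
  set θ := η / Real.sqrt (8*C2*((n:ℝ)+1)) with hθdef
  have hθ : 0 < θ := by rw [hθdef]; positivity
  have hθsq : θ^2 = η^2/(8*C2*((n:ℝ)+1)) := by
    rw [hθdef, div_pow, Real.sq_sqrt (by positivity)]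
  set d0 := η / (R ^ (2*γ) * Real.sqrt (8*C2*(M+1))) with hd0
  have hRγ : (0:ℝ) < R ^ (2*γ) := Real.rpow_pos_of_pos hR0 _
  have hd00 : 0 < d0 := by rw [hd0]; positivity
  have hd0sq : (d0 * R^(2*γ))^2 = η^2/(8*C2*(M+1)) := by
    have h : d0 * R^(2*γ) = η / Real.sqrt (8*C2*(M+1)) := by
      rw [hd0]; field_simp
    rw [h, div_pow, Real.sq_sqrt (by positivity)]
  -- eventual smallness
  have Ev1 : ∀ᶠ ε in 𝓝[>] (0:ℝ), δ ε < d0 := hδ0.eventually_lt_const hd00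
  have Ev2 : ∀ᶠ ε in 𝓝[>] (0:ℝ), ∀ k ∈ Sf, ε ∈ Ioo (0:ℝ) 1 →
      ∀ t ∈ Icc (0:ℝ) T, ‖Gam (φ ε) t k - Gam φlim t k‖ ≤ θ := by
    rw [eventually_all_finset]
    intro k _
    exact gam_tendsto_uniform hT hφ hφlim hM hbound hweak k hθ
  obtain ⟨ε₀, hε₀, hsubset⟩ := mem_nhdsGT_iff_exists_Ioo_subset.mp (Ev1.and Ev2)
  refine ⟨ε₀, hε₀, ?_⟩
  intro ε hε hεlt t ht
  obtain ⟨hδlt, hunif⟩ := hsubset ⟨hε.1, hεlt⟩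
  have hδp : 0 < δ ε := hδpos ε hε
  have hφε := hφ ε hε
  have hIbM : ∀ u : Finset Z2, ∑ k ∈ u, Iker T (φ ε) k ≤ M :=
    fun u => (Iker_sum_le hφε u).trans (hbound ε hε)
  have hIbL : ∀ u : Finset Z2, ∑ k ∈ u, Iker T φlim k ≤ Ml := fun u => Iker_sum_le hφlim u
  set a : Z2 → ℂ := fun k => Gam (fun s => Qop γ (δ ε) (φ ε s)) t k - Gam φlim t k with ha
  set F : Z2 → ℝ := fun k => knorm k ^ (2*ρ) * ‖a k‖^2 with hF
  have hF0 : ∀ k, 0 ≤ F k :=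
    fun k => mul_nonneg (Real.rpow_nonneg (knorm_pos k).le _) (sq_nonneg _)
  have hGε : ∀ k, ‖Gam (φ ε) t k‖^2 ≤ (knorm k^2)⁻¹ * Iker T (φ ε) k :=
    fun k => norm_gam_sq_le hφε k ht
  have hGl : ∀ k, ‖Gam φlim t k‖^2 ≤ (knorm k^2)⁻¹ * Iker T φlim k :=
    fun k => norm_gam_sq_le hφlim k ht
  have hIε0 : ∀ k, 0 ≤ Iker T (φ ε) k := Iker_nonneg T (φ ε)
  have hIl0 : ∀ k, 0 ≤ Iker T φlim k := Iker_nonneg T φlim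
  -- tail pointwise bound
  have tailk : ∀ k : Z2, R < knorm k →
      F k ≤ R^(2*ρ-2) * (2*(Iker T (φ ε) k + Iker T φlim k)) := by
    intro k hk
    have hκ : (0:ℝ) < knorm k ^ 2 := pow_pos (knorm_pos k) 2
    have hA : ‖a k‖ ≤ ‖Gam (φ ε) t k‖ + ‖Gam φlim t k‖ := by
      rw [ha]
      simp only []
      rw [Gam_Qop]
      refine (norm_sub_le _ _).trans ?_
      have : ‖lam γ (δ ε) k • Gam (φ ε) t k‖ ≤ ‖Gam (φ ε) t k‖ := by
        rw [norm_smul, Real.norm_eq_abs, abs_of_pos (lam_pos hδp.le k)]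
        exact mul_le_of_le_one_left (norm_nonneg _) (lam_le_one hδp.le k)
      linarith
    have hA2 : ‖a k‖^2 ≤ (knorm k^2)⁻¹ * (2*(Iker T (φ ε) k + Iker T φlim k)) := by
      have h1 := hGε k; have h2 := hGl k
      nlinarith [norm_nonneg (a k), norm_nonneg (Gam (φ ε) t k), norm_nonneg (Gam φlim t k),
        sq_nonneg (‖Gam (φ ε) t k‖ - ‖Gam φlim t k‖)]
    have step : F k ≤ knorm k ^ (2*ρ-2) * (2*(Iker T (φ ε) k + Iker T φlim k)) := by
      rw [hF, ← knorm_rpow_inv k ρ, mul_assoc]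
      exact mul_le_mul_of_nonneg_left hA2 (Real.rpow_nonneg (knorm_pos k).le _)
    refine step.trans ?_
    apply mul_le_mul_of_nonneg_right
      (Real.rpow_le_rpow_of_nonpos hR0 hk.le (by linarith))
    nlinarith [hIε0 k, hIl0 k]
  -- head pointwise bound
  have headk : ∀ k : Z2, knorm k ≤ R →
      F k ≤ C2*2*(δ ε*R^(2*γ))^2*Iker T (φ ε) k + C2*2*θ^2 := by
    intro k hk
    have hκ1 : (1:ℝ) ≤ knorm k ^ 2 := by nlinarith [one_le_knorm k]
    have hkSf : k ∈ Sf := by rw [hSf, Set.Finite.mem_toFinset]; exact hk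
    have hθk : ‖Gam (φ ε) t k - Gam φlim t k‖ ≤ θ := hunif k hkSf hε t ht
    have h1lam : 1 - lam γ (δ ε) k ≤ δ ε * R^(2*γ) :=
      (one_sub_lam_le hδp.le k).trans (mul_le_mul_of_nonneg_left
        (Real.rpow_le_rpow (knorm_pos k).le hk (by positivity)) hδp.le)
    have hsplit : a k = ((lam γ (δ ε) k - 1) : ℝ) • Gam (φ ε) t k
        + (Gam (φ ε) t k - Gam φlim t k) := by
      rw [ha]
      simp only []
      rw [Gam_Qop, sub_smul, one_smul]
      ring
    have habs : |lam γ (δ ε) k - 1| ≤ δ ε * R^(2*γ) := by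
      rw [abs_of_nonpos (by linarith [lam_le_one (γ := γ) hδp.le k])]
      linarith
    have hub : ‖a k‖ ≤ (δ ε * R^(2*γ)) * ‖Gam (φ ε) t k‖ + θ := by
      rw [hsplit]
      refine (norm_add_le _ _).trans ?_
      rw [norm_smul, Real.norm_eq_abs]
      have := mul_le_mul_of_nonneg_right habs (norm_nonneg (Gam (φ ε) t k))
      linarith
    have hGε1 : ‖Gam (φ ε) t k‖^2 ≤ Iker T (φ ε) k := by
      refine (hGε k).trans ?_
      have : (knorm k^2)⁻¹ ≤ 1 := by
        rw [inv_le_one_iff₀]; right; exact hκ1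
      nlinarith [hIε0 k]
    have hdR0 : (0:ℝ) ≤ δ ε * R^(2*γ) := by positivity
    have ha2 : ‖a k‖^2 ≤ 2*(δ ε*R^(2*γ))^2*Iker T (φ ε) k + 2*θ^2 := by
      nlinarith [norm_nonneg (a k), norm_nonneg (Gam (φ ε) t k), hθ.le,
        sq_nonneg ((δ ε * R^(2*γ)) * ‖Gam (φ ε) t k‖ - θ),
        mul_nonneg hdR0 (norm_nonneg (Gam (φ ε) t k)),
        mul_le_mul_of_nonneg_left hGε1 (sq_nonneg (δ ε * R^(2*γ)))]
    have hC2k : knorm k ^ (2*ρ) ≤ C2 := rpow_head_le hR1 k hk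
    have : F k ≤ C2 * (2*(δ ε*R^(2*γ))^2*Iker T (φ ε) k + 2*θ^2) := by
      rw [hF]
      apply mul_le_mul hC2k ha2 (sq_nonneg _) hC20.le
    nlinarith [this]
  -- summing up
  have main : ∀ u : Finset Z2, ∑ k ∈ u, F k ≤ η^2/4 + η^2/4 + η^2/4 := by
    intro u
    rw [← Finset.sum_inter_add_sum_sdiff u Sf F]
    have hdR : (δ ε * R^(2*γ))^2 ≤ η^2/(8*C2*(M+1)) := by
      have h2 : δ ε * R^(2*γ) ≤ d0 * R^(2*γ) :=
        mul_le_mul_of_nonneg_right hδlt.le hRγ.le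
      calc (δ ε * R^(2*γ))^2 ≤ (d0*R^(2*γ))^2 := by
            apply pow_le_pow_left₀ (by positivity) h2
        _ = η^2/(8*C2*(M+1)) := hd0sq
    have hterm1 : C2*2*(δ ε*R^(2*γ))^2*M ≤ η^2/4 := by
      have h1 : C2*2*(δ ε*R^(2*γ))^2*M ≤ C2*2*(η^2/(8*C2*(M+1)))*M := by
        have := mul_le_mul_of_nonneg_left hdR (by positivity : (0:ℝ) ≤ C2*2)
        nlinarith [this, hM.le]
      refine h1.trans ?_
      have heq : C2*2*(η^2/(8*C2*(M+1)))*M = (2*C2*M)*η^2/(8*C2*(M+1)) := by ring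
      rw [heq, div_le_div_iff₀ (by positivity) (by norm_num)]
      nlinarith [sq_nonneg η, hC20, hM, mul_nonneg (mul_nonneg hC20.le hM.le) (sq_nonneg η),
        mul_nonneg hC20.le (sq_nonneg η)]
    have hterm2 : (n:ℝ)*(C2*2*θ^2) ≤ η^2/4 := by
      rw [hθsq]
      have heq : (n:ℝ)*(C2*2*(η^2/(8*C2*((n:ℝ)+1)))) = (2*C2*(n:ℝ))*η^2/(8*C2*((n:ℝ)+1)) := by
        ring
      rw [heq, div_le_div_iff₀ (by positivity) (by norm_num)]
      have hn0 : (0:ℝ) ≤ (n:ℝ) := Nat.cast_nonneg n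
      nlinarith [sq_nonneg η, hC20, mul_nonneg (mul_nonneg hC20.le hn0) (sq_nonneg η),
        mul_nonneg hC20.le (sq_nonneg η)]
    have hhead : ∑ k ∈ u ∩ Sf, F k ≤ η^2/4 + η^2/4 := by
      have hb : ∀ k ∈ u ∩ Sf, F k ≤ C2*2*(δ ε*R^(2*γ))^2*Iker T (φ ε) k + C2*2*θ^2 := by
        intro k hk
        have hkS : knorm k ≤ R := by
          have := (Finset.mem_inter.mp hk).2
          rw [hSf, Set.Finite.mem_toFinset] at this
          exact this
        exact headk k hkS
      calc ∑ k ∈ u ∩ Sf, F k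
          ≤ ∑ k ∈ u ∩ Sf, (C2*2*(δ ε*R^(2*γ))^2*Iker T (φ ε) k + C2*2*θ^2) :=
            Finset.sum_le_sum hb
        _ = C2*2*(δ ε*R^(2*γ))^2 * (∑ k ∈ u ∩ Sf, Iker T (φ ε) k)
            + (u ∩ Sf).card * (C2*2*θ^2) := by
            rw [Finset.sum_add_distrib, ← Finset.mul_sum, Finset.sum_const, nsmul_eq_mul]
        _ ≤ C2*2*(δ ε*R^(2*γ))^2 * M + (n:ℝ)*(C2*2*θ^2) := by
            have hc1 : C2*2*(δ ε*R^(2*γ))^2 * (∑ k ∈ u ∩ Sf, Iker T (φ ε) k)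
                ≤ C2*2*(δ ε*R^(2*γ))^2 * M :=
              mul_le_mul_of_nonneg_left (hIbM _) (by positivity)
            have hc2 : ((u ∩ Sf).card : ℝ) ≤ (n:ℝ) := by
              exact_mod_cast Finset.card_le_card (Finset.inter_subset_right)
            have hc3 : ((u ∩ Sf).card : ℝ) * (C2*2*θ^2) ≤ (n:ℝ)*(C2*2*θ^2) :=
              mul_le_mul_of_nonneg_right hc2 (by positivity)
            linarith
        _ ≤ η^2/4 + η^2/4 := by
            have : C2*2*(δ ε*R^(2*γ))^2 * M = C2*2*(δ ε*R^(2*γ))^2*M := by ring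
            rw [this]
            linarith [hterm1, hterm2]
    have htail : ∑ k ∈ u \ Sf, F k ≤ η^2/4 := by
      have hb : ∀ k ∈ u \ Sf, F k ≤ R^(2*ρ-2) * (2*(Iker T (φ ε) k + Iker T φlim k)) := by
        intro k hk
        apply tailk
        have := (Finset.mem_sdiff.mp hk).2
        rw [hSf, Set.Finite.mem_toFinset] at this
        simpa using not_le.mp (by simpa [mem_setOf_eq] using this)
      calc ∑ k ∈ u \ Sf, F k
          ≤ ∑ k ∈ u \ Sf, R^(2*ρ-2) * (2*(Iker T (φ ε) k + Iker T φlim k)) :=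
            Finset.sum_le_sum hb
        _ = R^(2*ρ-2) * (2*((∑ k ∈ u \ Sf, Iker T (φ ε) k)
              + ∑ k ∈ u \ Sf, Iker T φlim k)) := by
            rw [← Finset.mul_sum]
            congr 1
            rw [← Finset.sum_add_distrib, ← Finset.mul_sum]
        _ ≤ R^(2*ρ-2) * (2*(M + Ml)) := by
            apply mul_le_mul_of_nonneg_left ?_ (Real.rpow_nonneg hR0.le _)
            have := hIbM (u \ Sf); have := hIbL (u \ Sf)
            linarith
        _ ≤ η^2/4 := hRtail
    linarith
  have hsummable : Summable F := summable_of_sum_le hF0 main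
  have htsum : ∑' k : Z2, F k ≤ η^2/4 + η^2/4 + η^2/4 := hsummable.tsum_le_of_sum_le main
  show hsNorm ρ a < η
  unfold hsNorm
  rw [show (fun k : Z2 => knorm k ^ (2*ρ) * ‖a k‖^2) = F from hF.symm, Real.sqrt_lt' hη]
  have : η^2/4 + η^2/4 + η^2/4 < η^2 := by nlinarith
  exact lt_of_le_of_lt htsum this
end

section
/- For every γ>0 there exists a constant C>0 such that for all δ∈(0,1]: Σ_{k∈ℤ²₀} 1/(|k|²(1+δ|k|^{2γ})) ≤ C(1+log(1/δ)). In particular the sum is finite for every δ>0. -/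
open MeasureTheory Filter Topology Set

/-- Mean value inequality: `a (x+1)^{-(1+a)} ≤ x^{-a} - (x+1)^{-a}`. -/
lemma aux_mvt {a x : ℝ} (ha : 0 < a) (hx : 1 ≤ x) :
    a * (x + 1) ^ (-(1 + a)) ≤ x ^ (-a) - (x + 1) ^ (-a) := by
  have hx0 : (0:ℝ) < x := lt_of_lt_of_le one_pos hx
  obtain ⟨c, hc, hceq⟩ := exists_hasDerivAt_eq_slope (fun t : ℝ => t ^ (-a))
    (fun t : ℝ => (-a) * t ^ (-a - 1)) (by linarith : x < x + 1)
    (by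
      apply continuousOn_of_forall_continuousAt
      intro t ht
      have : t ≠ 0 := by
        have := ht.1; intro h; rw [h] at this; linarith
      exact Real.continuousAt_rpow_const t (-a) (Or.inl this))
    (by
      intro t ht
      have : t ≠ 0 := by
        have := ht.1; intro h; rw [h] at this; linarith
      exact Real.hasDerivAt_rpow_const (Or.inl this))
  have hc0 : 0 < c := lt_trans hx0 hc.1
  have hslope : x ^ (-a) - (x + 1) ^ (-a) = a * c ^ (-a - 1) := by
    have h1 : (x + 1) - x = 1 := by ring
    rw [h1, div_one] at hceq
    linarith [hceq]
  rw [hslope]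
  have : (x + 1) ^ (-(1 + a)) ≤ c ^ (-a - 1) := by
    have h2 : (-(1 + a)) = -a - 1 := by ring
    rw [h2]
    exact Real.rpow_le_rpow_of_nonpos hc0 hc.2.le (by linarith)
  nlinarith [this]

/-- Tail estimate for the `p`-series via telescoping. -/
lemma aux_tail {a : ℝ} (ha : 0 < a) (N : ℕ) (hN : 1 ≤ N) :
    ∑' n : ℕ, ((n : ℝ) + N + 1) ^ (-(1 + a)) ≤ (N : ℝ) ^ (-a) / a := by
  set F : ℕ → ℝ := fun n => ((N : ℝ) + n) ^ (-a) with hF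
  have hNpos : (0:ℝ) < N := by exact_mod_cast Nat.lt_of_lt_of_le Nat.zero_lt_one hN
  have hFpos : ∀ n : ℕ, (1:ℝ) ≤ (N : ℝ) + n := by
    intro n
    have : (1:ℝ) ≤ (N:ℝ) := by exact_mod_cast hN
    have : (0:ℝ) ≤ (n:ℝ) := Nat.cast_nonneg n
    linarith [show (1:ℝ) ≤ (N:ℝ) from by exact_mod_cast hN]
  have hd : ∀ n : ℕ, a * ((n : ℝ) + N + 1) ^ (-(1 + a)) ≤ F n - F (n + 1) := by
    intro n
    have := aux_mvt ha (hFpos n)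
    have e1 : ((N:ℝ) + n) + 1 = (n:ℝ) + N + 1 := by ring
    have e2 : ((N:ℝ) + (n + 1 : ℕ)) = ((N:ℝ) + n) + 1 := by push_cast; ring
    simp only [hF, e2]
    calc a * ((n : ℝ) + N + 1) ^ (-(1 + a))
        ≤ ((N:ℝ) + n) ^ (-a) - ((n:ℝ) + N + 1) ^ (-a) := by rw [e1] at this; exact this
      _ = ((N:ℝ) + n) ^ (-a) - (((N:ℝ) + n) + 1) ^ (-a) := by rw [e1]
  have hdnn : ∀ n : ℕ, 0 ≤ F n - F (n + 1) := by
    intro n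
    have := hd n
    have h0 : 0 ≤ a * ((n : ℝ) + N + 1) ^ (-(1 + a)) := by positivity
    linarith
  have hFlim : Tendsto F atTop (𝓝 0) := by
    have h1 : Tendsto (fun n : ℕ => (N : ℝ) + n) atTop atTop :=
      tendsto_atTop_add_const_left _ _ tendsto_natCast_atTop_atTop
    exact (tendsto_rpow_neg_atTop ha).comp h1
  have hsum : HasSum (fun n => F n - F (n + 1)) (F 0) := by
    rw [hasSum_iff_tendsto_nat_of_nonneg hdnn]
    have : ∀ n : ℕ, ∑ i ∈ Finset.range n, (F i - F (i + 1)) = F 0 - F n := by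
      intro n; exact Finset.sum_range_sub' F n
    simp only [this]
    simpa using tendsto_const_nhds.sub hFlim
  have hsummand : Summable (fun n : ℕ => a * ((n : ℝ) + N + 1) ^ (-(1 + a))) :=
    Summable.of_nonneg_of_le (fun n => by positivity) hd hsum.summable
  have hsb : Summable (fun n : ℕ => ((n : ℝ) + N + 1) ^ (-(1 + a))) := by
    have := hsummand.mul_left a⁻¹
    simpa [← mul_assoc, inv_mul_cancel₀ (ne_of_gt ha)] using this
  have key : a * ∑' n : ℕ, ((n : ℝ) + N + 1) ^ (-(1 + a)) ≤ F 0 := by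
    rw [← tsum_mul_left]
    calc ∑' n : ℕ, a * ((n : ℝ) + N + 1) ^ (-(1 + a))
        ≤ ∑' n : ℕ, (F n - F (n + 1)) := Summable.tsum_le_tsum hd hsummand hsum.summable
      _ = F 0 := hsum.tsum_eq
  have hF0 : F 0 = (N : ℝ) ^ (-a) := by simp [hF]
  rw [le_div_iff₀ ha]
  rw [hF0] at key
  linarith [key]

lemma aux_nat {γ δ : ℝ} (hγ : 0 < γ) (hδ : 0 < δ) (hδ1 : δ ≤ 1) :
    Summable (fun n : ℕ => (8 * (n:ℝ)) * (1 / ((n:ℝ) ^ 2 * (1 + δ * (n:ℝ) ^ (2 * γ))))) ∧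
    ∑' n : ℕ, (8 * (n:ℝ)) * (1 / ((n:ℝ) ^ 2 * (1 + δ * (n:ℝ) ^ (2 * γ))))
      ≤ (8 * (1 + Real.log 2 + (2*γ)⁻¹) + 8 * (2*γ)⁻¹) * (1 + Real.log (1/δ)) := by
  have ha : 0 < 2 * γ := by linarith
  set a : ℝ := 2 * γ with haa
  set s' : ℕ → ℝ := fun n => (8 * (n:ℝ)) * (1 / ((n:ℝ) ^ 2 * (1 + δ * (n:ℝ) ^ a))) with hs'
  have hnn : ∀ n : ℕ, 0 ≤ s' n := by
    intro n
    have h1 : (0:ℝ) ≤ (n:ℝ) := Nat.cast_nonneg n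
    have h2 : (0:ℝ) ≤ (n:ℝ) ^ a := Real.rpow_nonneg h1 a
    positivity
  have hs0 : s' 0 = 0 := by simp [hs']
  -- pointwise tail comparison
  have hb : ∀ n : ℕ, s' n ≤ (8/δ) * (n:ℝ) ^ (-(1 + a)) := by
    intro n
    rcases Nat.eq_zero_or_pos n with h | h
    · subst h
      have hne : -(1+a) ≠ 0 := ne_of_lt (by linarith)
      rw [hs0]
      simp only [Nat.cast_zero, Real.zero_rpow hne, mul_zero]
      exact le_refl 0
    · have hn0 : (0:ℝ) < (n:ℝ) := by exact_mod_cast h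
      have hna : (0:ℝ) < (n:ℝ) ^ a := Real.rpow_pos_of_pos hn0 a
      have hd1 : (0:ℝ) < δ * ((n:ℝ) ^ 2 * (n:ℝ) ^ a) := by positivity
      have hd2 : δ * ((n:ℝ) ^ 2 * (n:ℝ) ^ a) ≤ (n:ℝ) ^ 2 * (1 + δ * (n:ℝ) ^ a) := by
        nlinarith [sq_nonneg (n:ℝ)]
      have h3 : 1 / ((n:ℝ) ^ 2 * (1 + δ * (n:ℝ) ^ a)) ≤ 1 / (δ * ((n:ℝ) ^ 2 * (n:ℝ) ^ a)) :=
        one_div_le_one_div_of_le hd1 hd2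
      have h4 : s' n ≤ (8 * (n:ℝ)) * (1 / (δ * ((n:ℝ) ^ 2 * (n:ℝ) ^ a))) := by
        apply mul_le_mul_of_nonneg_left h3 (by positivity)
      refine h4.trans_eq ?_
      rw [Real.rpow_neg hn0.le, Real.rpow_add hn0, Real.rpow_one]
      field_simp
  have hbsum : Summable (fun n : ℕ => (8/δ) * (n:ℝ) ^ (-(1 + a))) :=
    (Real.summable_nat_rpow.mpr (by linarith)).mul_left _
  have hsummable : Summable s' := Summable.of_nonneg_of_le hnn hb hbsum
  refine ⟨hsummable, ?_⟩
  -- head comparison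
  have hhead : ∀ n : ℕ, 1 ≤ n → s' n ≤ 8 * ((n:ℝ))⁻¹ := by
    intro n h
    have hn0 : (0:ℝ) < (n:ℝ) := by exact_mod_cast h
    have hna : (0:ℝ) ≤ (n:ℝ) ^ a := Real.rpow_nonneg hn0.le a
    have hd2 : (n:ℝ) ^ 2 ≤ (n:ℝ) ^ 2 * (1 + δ * (n:ℝ) ^ a) := by
      nlinarith [sq_nonneg (n:ℝ), mul_nonneg (mul_nonneg hδ.le hna) (sq_nonneg (n:ℝ))]
    have h3 : 1 / ((n:ℝ) ^ 2 * (1 + δ * (n:ℝ) ^ a)) ≤ 1 / ((n:ℝ) ^ 2) :=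
      one_div_le_one_div_of_le (by positivity) hd2
    have h4 : s' n ≤ (8 * (n:ℝ)) * (1 / ((n:ℝ) ^ 2)) :=
      mul_le_mul_of_nonneg_left h3 (by positivity)
    refine h4.trans_eq ?_
    field_simp
  -- choose the threshold
  have hδinv : (1:ℝ) ≤ 1/δ := one_le_one_div hδ hδ1
  set R : ℝ := (1/δ) ^ (a⁻¹) with hR
  have hR1 : (1:ℝ) ≤ R := Real.one_le_rpow hδinv (by positivity)
  set N : ℕ := ⌈R⌉₊ with hN
  have hN1 : 1 ≤ N := by
    have : 0 < N := Nat.ceil_pos.mpr (by linarith)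
    omega
  have hRN : R ≤ (N:ℝ) := Nat.le_ceil R
  have hN2R : (N:ℝ) ≤ 2 * R := by
    have := Nat.ceil_lt_add_one (by linarith : (0:ℝ) ≤ R)
    have h2 : (N:ℝ) < R + 1 := this
    linarith
  have hNpos : (0:ℝ) < N := by
    have : (1:ℝ) ≤ (N:ℝ) := by exact_mod_cast hN1
    linarith
  -- split the sum
  have hsplit := Summable.sum_add_tsum_nat_add (f := s') (N + 1) hsummable
  -- head estimate
  have hharm : (harmonic N : ℝ) = ∑ i ∈ Finset.range N, ((i:ℝ) + 1)⁻¹ := by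
    rw [harmonic]
    push_cast
    rfl
  have hheadsum : ∑ i ∈ Finset.range (N + 1), s' i ≤ 8 * (1 + Real.log N) := by
    rw [Finset.sum_range_succ']
    have h1 : ∀ i ∈ Finset.range N, s' (i + 1) ≤ 8 * ((i:ℝ) + 1)⁻¹ := by
      intro i _
      have := hhead (i + 1) (by omega)
      simpa using this
    calc (∑ i ∈ Finset.range N, s' (i + 1)) + s' 0
        ≤ (∑ i ∈ Finset.range N, 8 * ((i:ℝ) + 1)⁻¹) + 0 := by
          gcongr with i hi
          exacts [h1 i hi, le_of_eq hs0]
      _ = 8 * (harmonic N : ℝ) := by rw [hharm, add_zero, Finset.mul_sum]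
      _ ≤ 8 * (1 + Real.log N) := by
          have := harmonic_le_one_add_log N
          linarith
  have hlogN : Real.log N ≤ Real.log 2 + a⁻¹ * Real.log (1/δ) := by
    calc Real.log N ≤ Real.log (2 * R) := Real.log_le_log hNpos hN2R
      _ = Real.log 2 + Real.log R := Real.log_mul two_ne_zero (by positivity)
      _ = Real.log 2 + a⁻¹ * Real.log (1/δ) := by
          rw [hR, Real.log_rpow (by positivity)]
  -- tail estimate
  have htailsummand : Summable (fun n : ℕ => ((n:ℝ) + N + 1) ^ (-(1 + a))) := by
    have h0 : Summable (fun n : ℕ => (n:ℝ) ^ (-(1 + a))) :=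
      Real.summable_nat_rpow.mpr (by linarith)
    have h1 : Summable (fun n : ℕ => ((n + (N+1) : ℕ) : ℝ) ^ (-(1 + a))) :=
      (summable_nat_add_iff (f := fun n : ℕ => (n:ℝ) ^ (-(1 + a))) (N + 1)).mpr h0
    refine h1.congr fun n => ?_
    push_cast
    ring_nf
  have htail : ∑' n : ℕ, s' (n + (N + 1)) ≤ 8 * a⁻¹ := by
    have h1 : ∀ n : ℕ, s' (n + (N + 1)) ≤ (8/δ) * ((n:ℝ) + N + 1) ^ (-(1 + a)) := by
      intro n
      have := hb (n + (N + 1))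
      have hc : ((n + (N+1) : ℕ) : ℝ) = (n:ℝ) + N + 1 := by push_cast; ring
      rwa [hc] at this
    have h2 : Summable (fun n : ℕ => s' (n + (N + 1))) :=
      (summable_nat_add_iff (f := s') (N + 1)).mpr hsummable
    have h3 : ∑' n : ℕ, s' (n + (N + 1)) ≤ ∑' n : ℕ, (8/δ) * ((n:ℝ) + N + 1) ^ (-(1 + a)) :=
      Summable.tsum_le_tsum h1 h2 (htailsummand.mul_left _)
    have h4 : ∑' n : ℕ, (8/δ) * ((n:ℝ) + N + 1) ^ (-(1 + a))
        ≤ (8/δ) * ((N:ℝ) ^ (-a) / a) := by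
      rw [tsum_mul_left]
      exact mul_le_mul_of_nonneg_left (aux_tail ha N hN1) (by positivity)
    have hNa : (N:ℝ) ^ (-a) ≤ δ := by
      have hRa : R ^ a = 1/δ := by
        rw [hR, ← Real.rpow_mul (by positivity), inv_mul_cancel₀ (ne_of_gt ha), Real.rpow_one]
      have h5 : (1:ℝ)/δ ≤ (N:ℝ) ^ a := by
        rw [← hRa]
        exact Real.rpow_le_rpow (by linarith) hRN ha.le
      rw [Real.rpow_neg hNpos.le]
      rw [show δ = (1/δ)⁻¹ by field_simp]
      exact inv_anti₀ (by positivity) h5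
    have h6 : (8/δ) * ((N:ℝ) ^ (-a) / a) ≤ (8/δ) * (δ / a) := by
      gcongr
    calc ∑' n : ℕ, s' (n + (N + 1)) ≤ (8/δ) * ((N:ℝ) ^ (-a) / a) := h3.trans h4
      _ ≤ (8/δ) * (δ / a) := h6
      _ = 8 * a⁻¹ := by field_simp
  -- combine
  have hL : 0 ≤ Real.log (1/δ) := Real.log_nonneg hδinv
  have hlog2 : 0 ≤ Real.log 2 := Real.log_nonneg one_le_two
  have hainv : 0 < a⁻¹ := by positivity
  have htotal : ∑' n : ℕ, s' n ≤ 8 * (1 + Real.log 2 + a⁻¹ * Real.log (1/δ)) + 8 * a⁻¹ := by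
    rw [← hsplit]
    have := hheadsum.trans (by nlinarith [hlogN] :
      8 * (1 + Real.log N) ≤ 8 * (1 + Real.log 2 + a⁻¹ * Real.log (1/δ)))
    linarith [htail]
  calc ∑' n : ℕ, s' n ≤ 8 * (1 + Real.log 2 + a⁻¹ * Real.log (1/δ)) + 8 * a⁻¹ := htotal
    _ ≤ (8 * (1 + Real.log 2 + a⁻¹) + 8 * a⁻¹) * (1 + Real.log (1/δ)) := by nlinarith

/-- the sup-norm of a nonzero lattice point, as a natural number -/
def mfun (k : Z2) : ℕ := max k.val.1.natAbs k.val.2.natAbs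

lemma mfun_one_le (k : Z2) : 1 ≤ mfun k := by
  rcases Nat.eq_zero_or_pos (mfun k) with h | h
  · exfalso
    rw [mfun, Nat.max_eq_zero_iff] at h
    exact k.property (Prod.ext (Int.natAbs_eq_zero.mp h.1) (Int.natAbs_eq_zero.mp h.2))
  · exact h

lemma aux_fiber (u : Finset Z2) (b : ℕ) (hb : 1 ≤ b) :
    (u.filter (fun k => mfun k = b)).card ≤ 8 * b := by
  classical
  set D : Finset (ℤ × ℤ) :=
    (Finset.Icc (-(b:ℤ)) b ×ˢ Finset.Icc (-(b:ℤ)) b) \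
      (Finset.Icc (-(b:ℤ)+1) ((b:ℤ)-1) ×ˢ Finset.Icc (-(b:ℤ)+1) ((b:ℤ)-1)) with hD
  have hcard : (u.filter (fun k => mfun k = b)).card ≤ D.card := by
    apply Finset.card_le_card_of_injOn (fun k => k.val)
    · intro k hk
      rw [Finset.mem_coe, Finset.mem_filter] at hk
      have hmb : mfun k = b := hk.2
      have h1 : k.val.1.natAbs ≤ b := le_trans (le_max_left _ _) hmb.le
      have h2 : k.val.2.natAbs ≤ b := le_trans (le_max_right _ _) hmb.le
      have h3 : k.val.1.natAbs = b ∨ k.val.2.natAbs = b := by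
        rcases max_cases k.val.1.natAbs k.val.2.natAbs with ⟨he, _⟩ | ⟨he, _⟩
        · left; rw [← he]; exact hmb
        · right; rw [← he]; exact hmb
      rw [hD, Finset.mem_coe, Finset.mem_sdiff, Finset.mem_product, Finset.mem_product]
      simp only [Finset.mem_Icc]
      constructor
      · constructor <;> omega
      · intro hcon
        omega
    · intro k _ k' _ h
      exact Subtype.ext h
  have hsub : (Finset.Icc (-(b:ℤ)+1) ((b:ℤ)-1) ×ˢ Finset.Icc (-(b:ℤ)+1) ((b:ℤ)-1)) ⊆
      (Finset.Icc (-(b:ℤ)) b ×ˢ Finset.Icc (-(b:ℤ)) b) := by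
    apply Finset.product_subset_product <;>
      exact Finset.Icc_subset_Icc (by omega) (by omega)
  have hDcard : D.card = 8 * b := by
    rw [hD, Finset.card_sdiff_of_subset hsub, Finset.card_product, Finset.card_product,
      Int.card_Icc, Int.card_Icc]
    have e1 : ((b:ℤ) + 1 - (-(b:ℤ))).toNat = 2*b+1 := by omega
    have e2 : (((b:ℤ)-1) + 1 - (-(b:ℤ)+1)).toNat = 2*b-1 := by omega
    rw [e1, e2]
    rcases Nat.exists_eq_add_of_le hb with ⟨c, hc⟩
    subst hc
    have h1 : 2*(1+c) - 1 = 2*c+1 := by omega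
    rw [h1]
    have h2 : (2*(1+c)+1)*(2*(1+c)+1) = 8*(1+c) + (2*c+1)*(2*c+1) := by ring
    omega
  omega

/-- `Σ_{k∈ℤ²₀} 1/(|k|²(1+δ|k|^{2γ})) ≤ C(1 + log(1/δ))` for all `δ ∈ (0,1]`,
the sum being finite for every such `δ`. -/
theorem stmt7 (γ : ℝ) (hγ : 0 < γ) :
    ∃ C : ℝ, 0 < C ∧ ∀ δ ∈ Ioc (0 : ℝ) 1,
      (Summable fun k : Z2 => 1 / (knorm k ^ 2 * (1 + δ * knorm k ^ (2 * γ)))) ∧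
      ∑' k : Z2, 1 / (knorm k ^ 2 * (1 + δ * knorm k ^ (2 * γ)))
        ≤ C * (1 + Real.log (1 / δ)) := by
  have ha : 0 < 2 * γ := by linarith
  refine ⟨8 * (1 + Real.log 2 + (2*γ)⁻¹) + 8 * (2*γ)⁻¹, ?_, ?_⟩
  · have hlog2 : 0 < Real.log 2 := Real.log_pos one_lt_two
    have hainv : 0 < (2*γ)⁻¹ := by positivity
    nlinarith
  intro δ hδmem
  obtain ⟨hδ, hδ1⟩ := hδmem
  obtain ⟨hsum_s, hbound_s⟩ := aux_nat hγ hδ hδ1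
  have hknorm0 : ∀ k : Z2, 0 ≤ knorm k := fun k => Real.sqrt_nonneg _
  have hm1 : ∀ k : Z2, (1:ℝ) ≤ (mfun k : ℝ) := fun k => by exact_mod_cast mfun_one_le k
  have hmk : ∀ k : Z2, (mfun k : ℝ) ≤ knorm k := by
    intro k
    have h1 : ((mfun k : ℝ))^2 ≤ (k.val.1:ℝ)^2 + (k.val.2:ℝ)^2 := by
      have e1 : ((k.val.1.natAbs : ℕ) : ℝ)^2 = (k.val.1:ℝ)^2 := by
        simp [Nat.cast_natAbs, sq_abs]
      have e2 : ((k.val.2.natAbs : ℕ) : ℝ)^2 = (k.val.2:ℝ)^2 := by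
        simp [Nat.cast_natAbs, sq_abs]
      rcases max_cases k.val.1.natAbs k.val.2.natAbs with ⟨he, _⟩ | ⟨he, _⟩
      · rw [mfun, he, e1]; nlinarith [sq_nonneg (k.val.2:ℝ)]
      · rw [mfun, he, e2]; nlinarith [sq_nonneg (k.val.1:ℝ)]
    calc (mfun k : ℝ) = Real.sqrt ((mfun k:ℝ)^2) := (Real.sqrt_sq (by positivity)).symm
      _ ≤ knorm k := Real.sqrt_le_sqrt h1
  set s' : ℕ → ℝ := fun n => (8 * (n:ℝ)) * (1 / ((n:ℝ) ^ 2 * (1 + δ * (n:ℝ) ^ (2 * γ)))) with hs'def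
  set t : ℕ → ℝ := fun n => 1 / ((n:ℝ) ^ 2 * (1 + δ * (n:ℝ) ^ (2 * γ))) with htdef
  set g : Z2 → ℝ := fun k => 1 / (knorm k ^ 2 * (1 + δ * knorm k ^ (2 * γ))) with hgdef
  have ht_nonneg : ∀ n : ℕ, 0 ≤ t n := by
    intro n
    rw [htdef]
    have h2 : (0:ℝ) ≤ (n:ℝ) ^ (2*γ) := Real.rpow_nonneg (Nat.cast_nonneg n) _
    have h3 : (0:ℝ) ≤ (n:ℝ)^2 * (1 + δ * (n:ℝ)^(2*γ)) := by
      apply mul_nonneg (sq_nonneg _)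
      nlinarith
    positivity
  have hs'_nonneg : ∀ n : ℕ, 0 ≤ s' n := by
    intro n
    rw [hs'def]
    have h2 : (0:ℝ) ≤ (n:ℝ) ^ (2*γ) := Real.rpow_nonneg (Nat.cast_nonneg n) _
    have h3 : (0:ℝ) ≤ 1 / ((n:ℝ)^2 * (1 + δ * (n:ℝ)^(2*γ))) := by
      apply one_div_nonneg.mpr
      apply mul_nonneg (sq_nonneg _)
      nlinarith
    have h4 : (0:ℝ) ≤ 8 * (n:ℝ) := by positivity
    exact mul_nonneg h4 h3
  have hg_nonneg : ∀ k : Z2, 0 ≤ g k := by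
    intro k
    rw [hgdef]
    have h2 : (0:ℝ) ≤ knorm k ^ (2*γ) := Real.rpow_nonneg (hknorm0 k) _
    apply one_div_nonneg.mpr
    apply mul_nonneg (sq_nonneg _)
    nlinarith
  have hterm : ∀ k : Z2, g k ≤ t (mfun k) := by
    intro k
    rw [hgdef, htdef]
    have h1 := hm1 k
    have h2 := hmk k
    have hmpos : (0:ℝ) < (mfun k : ℝ) := lt_of_lt_of_le one_pos h1
    have hrnn : (0:ℝ) ≤ ((mfun k : ℝ)) ^ (2*γ) := Real.rpow_nonneg hmpos.le _
    apply one_div_le_one_div_of_le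
    · have : (0:ℝ) < 1 + δ * ((mfun k:ℝ)) ^ (2*γ) := by nlinarith
      positivity
    · have h3 : ((mfun k:ℝ))^2 ≤ knorm k ^ 2 := by nlinarith
      have h4 : ((mfun k:ℝ))^(2*γ) ≤ knorm k ^ (2*γ) :=
        Real.rpow_le_rpow hmpos.le h2 ha.le
      have h5 : 1 + δ * ((mfun k:ℝ))^(2*γ) ≤ 1 + δ * knorm k ^ (2*γ) := by nlinarith
      apply mul_le_mul h3 h5 (by nlinarith) (sq_nonneg _)
  have hkey : ∀ u : Finset Z2, ∑ k ∈ u, g k ≤ ∑' n : ℕ, s' n := by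
    intro u
    calc ∑ k ∈ u, g k ≤ ∑ k ∈ u, t (mfun k) := Finset.sum_le_sum (fun k _ => hterm k)
      _ = ∑ b ∈ u.image mfun, (u.filter (fun k => mfun k = b)).card • t b :=
          Finset.sum_comp t mfun
      _ ≤ ∑ b ∈ u.image mfun, s' b := by
          apply Finset.sum_le_sum
          intro b hbmem
          obtain ⟨k, _, hk⟩ := Finset.mem_image.mp hbmem
          have hb1 : 1 ≤ b := hk ▸ mfun_one_le k
          rw [nsmul_eq_mul]
          have hcard : ((u.filter (fun k => mfun k = b)).card : ℝ) ≤ ((8*b : ℕ) : ℝ) := by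
            exact_mod_cast aux_fiber u b hb1
          calc ((u.filter (fun k => mfun k = b)).card : ℝ) * t b
              ≤ ((8*b : ℕ) : ℝ) * t b := mul_le_mul_of_nonneg_right hcard (ht_nonneg b)
            _ = s' b := by rw [hs'def, htdef]; push_cast; ring
      _ ≤ ∑' n : ℕ, s' n := Summable.sum_le_tsum _ (fun b _ => hs'_nonneg b) hsum_s
  have hsummg : Summable g := summable_of_sum_le (fun k => hg_nonneg k) hkey
  exact ⟨hsummg, (Summable.tsum_le_of_sum_le hsummg hkey).trans hbound_s⟩
end
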